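/- Generalized Watson's Lemma: let f : (0,∞) → ℂ be integrable with Laplace transform L[f](ζ) = ∫_0^∞ f(x) e^{-ζx} dx converging for some ζ_0 ∈ ℂ, and suppose f(x) = Σ_{n=0}^N a_n x^{β_n - 1} + o(x^{β_N - 1}) as x → 0+, where Re β_0 > 0 and Re β_n > Re β_{n-1}. Then L[f](ζ) = Σ_{n=0}^N a_n Γ(β_n) ζ^{-β_n} + o(ζ^{-β_N}) as ζ → ∞ in any sector |arg ζ| ≤ π/2 − δ, 0 < δ ≤ π/2. -/

import Mathlib

open MeasureTheory Filter Finset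

section Helpers

open Set

lemma intPowExp {s c : ℝ} (hs : 0 < s) (hc : 0 < c) :
    IntegrableOn (fun x : ℝ => x ^ (s-1) * Real.exp (-(c*x))) (Set.Ioi 0) := by
  have h0 := Real.GammaIntegral_convergent hs
  have h1 : IntegrableOn (fun x : ℝ => Real.exp (-(c*x)) * (c*x) ^ (s-1)) (Set.Ioi 0) := by
    rw [integrableOn_Ioi_comp_mul_left_iff (fun x : ℝ => Real.exp (-x) * x ^ (s-1)) 0 hc]
    simpa using h0
  have h2 : IntegrableOn (fun x : ℝ => (c ^ (s-1))⁻¹ * (Real.exp (-(c*x)) * (c*x) ^ (s-1)))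
      (Set.Ioi 0) := h1.const_mul _
  refine h2.congr_fun (fun x hx => ?_) measurableSet_Ioi
  have hx0 : (0:ℝ) < x := hx
  beta_reduce
  rw [Real.mul_rpow hc.le hx0.le]
  field_simp [(Real.rpow_pos_of_pos hc (s-1)).ne']

lemma contOn_aux (b ζ : ℂ) :
    ContinuousOn (fun x : ℝ => (x:ℂ) ^ (b-1) * Complex.exp (-ζ*x)) (Set.Ioi 0) := by
  apply ContinuousOn.mul
  · apply ContinuousOn.cpow Complex.continuous_ofReal.continuousOn continuousOn_const
    intro x hx
    exact Or.inl (by simpa using (hx : (0:ℝ) < x))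
  · exact (Complex.continuous_exp.comp
      ((continuous_const.mul Complex.continuous_ofReal))).continuousOn

lemma norm_aux {b ζ : ℂ} {x : ℝ} (hx : 0 < x) :
    ‖(x:ℂ) ^ (b-1) * Complex.exp (-ζ*x)‖ = x ^ (b.re-1) * Real.exp (-(ζ.re*x)) := by
  rw [norm_mul,
    Complex.norm_cpow_eq_rpow_re_of_pos hx, Complex.norm_exp]
  norm_num

lemma intPowExpC {b ζ : ℂ} (hb : 0 < b.re) (hζ : 0 < ζ.re) :
    IntegrableOn (fun x : ℝ => (x:ℂ) ^ (b-1) * Complex.exp (-ζ*x)) (Set.Ioi 0) := by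
  refine Integrable.mono' (intPowExp hb hζ)
    ((contOn_aux b ζ).aestronglyMeasurable measurableSet_Ioi) ?_
  filter_upwards [ae_restrict_mem measurableSet_Ioi] with x hx
  rw [norm_aux (hx : (0:ℝ) < x)]

lemma diffF1 {b : ℂ} (hb : 0 < b.re) :
    DifferentiableOn ℂ (fun ζ : ℂ => ∫ x in Set.Ioi (0:ℝ), (x:ℂ) ^ (b-1) * Complex.exp (-ζ*x))
      {ζ : ℂ | 0 < ζ.re} := by
  intro ζ₁ hζ₁
  have hζ₁' : 0 < ζ₁.re := hζ₁
  set ε : ℝ := ζ₁.re / 2 with hε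
  have hεpos : 0 < ε := by positivity
  have key := hasDerivAt_integral_of_dominated_loc_of_deriv_le (F := fun (ζ : ℂ) (x : ℝ) =>
      (x:ℂ) ^ (b-1) * Complex.exp (-ζ*x))
    (F' := fun (ζ : ℂ) (x : ℝ) => (-(x:ℂ)) * ((x:ℂ) ^ (b-1) * Complex.exp (-ζ*x)))
    (μ := volume.restrict (Set.Ioi 0)) (x₀ := ζ₁)
    (bound := fun x : ℝ => x ^ ((b.re+1)-1) * Real.exp (-(ε*x))) (Metric.ball_mem_nhds ζ₁ hεpos)
    ?_ ?_ ?_ ?_ ?_ ?_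
  · exact (key.2.differentiableAt).differentiableWithinAt
  · filter_upwards with ζ
    exact ((contOn_aux b ζ).aestronglyMeasurable measurableSet_Ioi)
  · exact intPowExpC hb hζ₁'
  · apply ContinuousOn.aestronglyMeasurable _ measurableSet_Ioi
    exact (Complex.continuous_ofReal.continuousOn.neg).mul (contOn_aux b ζ₁)
  · filter_upwards [ae_restrict_mem measurableSet_Ioi] with x hx ζ hζ
    have hx0 : (0:ℝ) < x := hx
    have hre : ε ≤ ζ.re := by
      have := Complex.abs_re_le_norm (ζ - ζ₁)
      have h2 : ‖ζ - ζ₁‖ < ε := by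
        simpa [Complex.dist_eq] using (Metric.mem_ball.mp hζ)
      have : |ζ.re - ζ₁.re| < ε := by
        simpa [Complex.sub_re] using lt_of_le_of_lt this h2
      have := abs_lt.mp this
      simp only [hε] at *
      linarith [this.1]
    rw [norm_mul, norm_aux hx0]
    have : ‖(-(x:ℂ))‖ = x := by simp [abs_of_pos hx0]
    rw [this]
    have hxp : x * (x ^ (b.re-1) * Real.exp (-(ζ.re*x)))
        = x ^ ((b.re+1)-1) * Real.exp (-(ζ.re*x)) := by
      rw [show (b.re+1)-1 = 1 + (b.re -1) by ring, Real.rpow_add hx0, Real.rpow_one]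
      ring
    rw [hxp]
    gcongr
  · exact intPowExp (by linarith) hεpos
  · filter_upwards [ae_restrict_mem measurableSet_Ioi] with x hx ζ hζ
    have hd : HasDerivAt (fun ζ : ℂ => Complex.exp (-ζ*x)) ((-(x:ℂ)) * Complex.exp (-ζ*x)) ζ := by
      have h1 : HasDerivAt (fun ζ : ℂ => -ζ*(x:ℂ)) (-(x:ℂ)) ζ := by
        simpa using ((hasDerivAt_id ζ).neg.mul_const (x:ℂ))
      simpa [mul_comm] using h1.cexp
    have := hd.const_mul ((x:ℂ) ^ (b-1))
    exact this.congr_deriv (by ring)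

lemma laplace_cpow {b : ℂ} (hb : 0 < b.re) {ζ : ℂ} (hζ : 0 < ζ.re) :
    ∫ x in Set.Ioi (0:ℝ), (x:ℂ) ^ (b-1) * Complex.exp (-ζ*x) = Complex.Gamma b * ζ ^ (-b) := by
  set F₁ : ℂ → ℂ := fun ζ => ∫ x in Set.Ioi (0:ℝ), (x:ℂ) ^ (b-1) * Complex.exp (-ζ*x)
  set F₂ : ℂ → ℂ := fun ζ => Complex.Gamma b * ζ ^ (-b)
  have hU : IsOpen {ζ : ℂ | 0 < ζ.re} := isOpen_lt continuous_const Complex.continuous_re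
  have hUc : IsPreconnected {ζ : ℂ | 0 < ζ.re} := (convex_halfSpace_re_gt 0).isPreconnected
  have h1 : AnalyticOnNhd ℂ F₁ {ζ : ℂ | 0 < ζ.re} := (diffF1 hb).analyticOnNhd hU
  have h2 : AnalyticOnNhd ℂ F₂ {ζ : ℂ | 0 < ζ.re} := by
    apply DifferentiableOn.analyticOnNhd _ hU
    intro z hz
    exact ((((hasDerivAt_id z).cpow_const
      (Or.inl hz)).differentiableAt).const_mul _).differentiableWithinAt
  have hreal : ∀ r : ℝ, 0 < r → F₁ r = F₂ r := by
    intro r hr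
    have := Complex.integral_cpow_mul_exp_neg_mul_Ioi hb hr
    have e1 : F₁ (r:ℂ) = ∫ (t : ℝ) in Set.Ioi 0, (t:ℂ) ^ (b - 1) * Complex.exp (-(r * t)) := by
      apply setIntegral_congr_fun measurableSet_Ioi
      intro x hx
      push_cast
      ring_nf
    rw [e1, this]
    have harg : (r:ℂ).arg ≠ Real.pi := by
      rw [Complex.arg_ofReal_of_nonneg hr.le]
      exact Real.pi_ne_zero.symm
    rw [show (1/(r:ℂ)) = (r:ℂ)⁻¹ by ring, Complex.inv_cpow _ _ harg, ← Complex.cpow_neg]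
    ring
  have hfreq : ∃ᶠ z in nhdsWithin (1:ℂ) {(1:ℂ)}ᶜ, F₁ z = F₂ z := by
    have htend : Tendsto (fun n : ℕ => ((1 + 1/(n+1) : ℝ) : ℂ)) atTop
        (nhdsWithin 1 {(1:ℂ)}ᶜ) := by
      rw [tendsto_nhdsWithin_iff]
      constructor
      · have : Tendsto (fun n : ℕ => (1 + 1/(n+1) : ℝ)) atTop (nhds 1) := by
          have := tendsto_one_div_add_atTop_nhds_zero_nat (𝕜 := ℝ)
          simpa using tendsto_const_nhds.add this
        have h2 := (Complex.continuous_ofReal.tendsto 1).comp this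
        simpa [Function.comp_def] using h2
      · filter_upwards with n
        simp only [Set.mem_compl_iff, Set.mem_singleton_iff]
        intro h
        have : (1 + 1/(n+1) : ℝ) = 1 := by exact_mod_cast h
        have hpos : (0:ℝ) < 1/(n+1) := by positivity
        linarith
    apply htend.frequently
    apply Frequently.of_forall
    intro n
    exact hreal _ (by positivity)
  have := h1.eqOn_of_preconnected_of_frequently_eq h2 hUc
    (by norm_num : (1:ℂ) ∈ {ζ : ℂ | 0 < ζ.re}) hfreq
  exact this hζ

lemma norm_setInt_le {φ : ℝ → ℂ} {ψ : ℝ → ℝ} {s : Set ℝ} (hs : MeasurableSet s)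
    (hφ : IntegrableOn φ s) (hψ : IntegrableOn ψ s) (hle : ∀ x ∈ s, ‖φ x‖ ≤ ψ x) :
    ‖∫ x in s, φ x‖ ≤ ∫ x in s, ψ x :=
  (norm_integral_le_integral_norm _).trans (setIntegral_mono_on hφ.norm hψ hs hle)

lemma setInt_le_full {ψ : ℝ → ℝ} {s : Set ℝ} (hsub : s ⊆ Set.Ioi 0) (hms : MeasurableSet s)
    (hψ : IntegrableOn ψ (Set.Ioi 0)) (h0 : ∀ x ∈ Set.Ioi (0:ℝ), 0 ≤ ψ x) :
    ∫ x in s, ψ x ≤ ∫ x in Set.Ioi 0, ψ x := by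
  apply setIntegral_mono_set hψ
  · filter_upwards [ae_restrict_mem measurableSet_Ioi] with x hx
    exact h0 x hx
  · exact HasSubset.Subset.eventuallyLE hsub

end Helpers

set_option maxHeartbeats 2000000

/-- The filter `ζ → ∞` within the sector `|arg ζ| ≤ π/2 − δ`. -/
noncomputable def sectorFilter (δ : ℝ) : Filter ℂ :=
  comap (fun ζ : ℂ => ‖ζ‖) atTop ⊓ 𝓟 {ζ : ℂ | |Complex.arg ζ| ≤ Real.pi / 2 - δ}

/-- Generalized Watson's Lemma: if `f` has Laplace transform converging at some `ζ₀`
and `f(x) = Σ_{n≤N} aₙ x^{βₙ-1} + o(x^{β_N-1})` as `x → 0⁺` with `Re β₀ > 0` and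
`Re βₙ` strictly increasing, then
`L[f](ζ) = Σ_{n≤N} aₙ Γ(βₙ) ζ^{-βₙ} + o(ζ^{-β_N})` as `ζ → ∞` in any sector
`|arg ζ| ≤ π/2 − δ`, `0 < δ ≤ π/2`. -/
theorem generalized_watson_lemma (f : ℝ → ℂ) (N : ℕ) (a β : ℕ → ℂ)
    (hβ0 : 0 < (β 0).re) (hβmono : ∀ n, n < N → (β n).re < (β (n + 1)).re)
    (ζ0 : ℂ)
    (hconv : IntegrableOn (fun x : ℝ => f x * Complex.exp (-ζ0 * x)) (Set.Ioi 0))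
    (hasym : (fun x : ℝ => f x - ∑ n ∈ range (N + 1), a n * (x : ℂ) ^ (β n - 1))
      =o[nhdsWithin 0 (Set.Ioi 0)] fun x : ℝ => (x : ℂ) ^ (β N - 1)) :
    ∀ δ : ℝ, 0 < δ → δ ≤ Real.pi / 2 →
      (fun ζ : ℂ => (∫ x in Set.Ioi (0:ℝ), f x * Complex.exp (-ζ * x)) -
          ∑ n ∈ range (N + 1), a n * Complex.Gamma (β n) * ζ ^ (-β n))
        =o[sectorFilter δ] fun ζ : ℂ => ζ ^ (-β N) := by
  intro δ hδ hδ2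
  -- basic positivity facts
  have hβpos : ∀ n, n ≤ N → 0 < (β n).re := by
    intro n
    induction n with
    | zero => exact fun _ => hβ0
    | succ k ih =>
      intro h
      exact (ih (Nat.le_of_succ_le h)).trans (hβmono k h)
  have hρ : 0 < (β N).re := hβpos N le_rfl
  set ρ : ℝ := (β N).re with hρdef
  have hs₀ : 0 < Real.sin δ := Real.sin_pos_of_pos_of_lt_pi hδ
    (lt_of_le_of_lt hδ2 (by linarith [Real.pi_pos]))
  set s₀ : ℝ := Real.sin δ with hs₀def
  set K : ℝ := Real.exp (Real.pi/2 * |(β N).im|) with hKdef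
  have hK : 0 < K := Real.exp_pos _
  have hΓρ : 0 < Real.Gamma ρ := Real.Gamma_pos_of_pos hρ
  set C₁ : ℝ := Real.Gamma ρ * s₀ ^ (-ρ) with hC₁def
  have hC₁ : 0 < C₁ := mul_pos hΓρ (Real.rpow_pos_of_pos hs₀ _)
  rw [Asymptotics.isLittleO_iff]
  intro ε hε
  set ε₁ : ℝ := ε / (2*K*C₁) with hε₁def
  have hε₁ : 0 < ε₁ := by positivity
  -- choose T from the asymptotic hypothesis
  have hA := (Asymptotics.isLittleO_iff.mp hasym) hε₁
  rw [eventually_iff, mem_nhdsGT_iff_exists_Ioo_subset] at hA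
  obtain ⟨u, hu0, hu⟩ := hA
  have hu0' : (0:ℝ) < u := hu0
  set T : ℝ := u/2 with hTdef
  have hT0 : 0 < T := by positivity
  -- the bound near zero holds on Ioc 0 T
  have hgbound : ∀ x ∈ Set.Ioc (0:ℝ) T, ‖f x - ∑ n ∈ range (N + 1), a n * (x : ℂ) ^ (β n - 1)‖
      ≤ ε₁ * x ^ (ρ - 1) := by
    intro x hx
    have hx1 : x ∈ Set.Ioo (0:ℝ) u := ⟨hx.1, lt_of_le_of_lt hx.2 (by linarith)⟩
    have h2 := hu hx1
    rw [Set.mem_setOf_eq] at h2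
    have h3 : ‖(x:ℂ) ^ (β N - 1)‖ = x ^ (ρ - 1) := by
      rw [Complex.norm_cpow_eq_rpow_re_of_pos hx.1, Complex.sub_re,
        Complex.one_re]
    rwa [h3] at h2
  -- constants for the tail
  set M : ℝ := ∫ x in Set.Ioi (0:ℝ), ‖f x * Complex.exp (-ζ0 * x)‖ with hMdef
  have hM0 : 0 ≤ M := setIntegral_nonneg measurableSet_Ioi fun x _ => norm_nonneg _
  set Kn : ℕ → ℝ := fun n => ∫ x in Set.Ioi (0:ℝ),
    x ^ ((β n).re - 1) * Real.exp (-((1/2)*x)) with hKndef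
  have hKn0 : ∀ n, 0 ≤ Kn n := fun n => setIntegral_nonneg measurableSet_Ioi fun x hx =>
    mul_nonneg (Real.rpow_nonneg (le_of_lt hx) _) (Real.exp_pos _).le
  set D : ℝ := M * Real.exp (ζ0.re * T) + ∑ n ∈ range (N+1), ‖a n‖ * Kn n with hDdef
  have hD0 : 0 ≤ D := add_nonneg (mul_nonneg hM0 (Real.exp_pos _).le)
    (Finset.sum_nonneg fun n _ => mul_nonneg (norm_nonneg _) (hKn0 n))
  -- eventual conditions on r = |ζ|
  have hRcond : ∀ᶠ r in atTop, (1:ℝ) ≤ r ∧ max 1 ζ0.re ≤ s₀ * r ∧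
      (D+1) * Real.exp (-(s₀*T/2) * r) ≤ ε/(2*K) * r ^ (-ρ) := by
    have h1 : ∀ᶠ r in (atTop : Filter ℝ), (1:ℝ) ≤ r := eventually_ge_atTop 1
    have h2 : ∀ᶠ r in (atTop : Filter ℝ), max 1 ζ0.re / s₀ ≤ r := eventually_ge_atTop _
    have h3 : Tendsto (fun r : ℝ => r ^ ρ * Real.exp (-(s₀*T/2) * r)) atTop (nhds 0) :=
      tendsto_rpow_mul_exp_neg_mul_atTop_nhds_zero ρ _ (by positivity)
    have h4 := h3.eventually (gt_mem_nhds (show (0:ℝ) < ε/(2*K)/(D+1) by positivity))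
    filter_upwards [h1, h2, h4] with r hr1 hr2 hr4
    refine ⟨hr1, ?_, ?_⟩
    · rw [div_le_iff₀ hs₀] at hr2
      linarith [hr2]
    · have hr0 : (0:ℝ) < r := lt_of_lt_of_le one_pos hr1
      have key : r ^ ρ * Real.exp (-(s₀*T/2) * r) ≤ ε/(2*K)/(D+1) := le_of_lt hr4
      have : (D+1) * Real.exp (-(s₀*T/2) * r) ≤ (D+1) * (ε/(2*K)/(D+1) * r ^ (-ρ)) := by
        have hrr : Real.exp (-(s₀*T/2) * r) ≤ ε/(2*K)/(D+1) * r ^ (-ρ) := by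
          have hx : Real.exp (-(s₀*T/2) * r) = r ^ ρ * Real.exp (-(s₀*T/2) * r) * r ^ (-ρ) := by
            rw [mul_comm (r ^ ρ), mul_assoc, ← Real.rpow_add hr0]
            simp
          rw [hx]
          exact mul_le_mul_of_nonneg_right key (Real.rpow_nonneg hr0.le _)
        exact mul_le_mul_of_nonneg_left hrr (by positivity)
      calc (D+1) * Real.exp (-(s₀*T/2) * r) ≤ (D+1) * (ε/(2*K)/(D+1) * r ^ (-ρ)) := this
        _ = ε/(2*K) * r ^ (-ρ) := by field_simp
  -- transfer to the sector filter
  have hcomap : ∀ {p : ℝ → Prop}, (∀ᶠ r in atTop, p r) →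
      ∀ᶠ ζ in sectorFilter δ, p ‖ζ‖ := by
    intro p hp
    exact Filter.Eventually.filter_mono inf_le_left (Filter.preimage_mem_comap hp)
  have hargev : ∀ᶠ ζ in sectorFilter δ, |Complex.arg ζ| ≤ Real.pi / 2 - δ :=
    Filter.Eventually.filter_mono inf_le_right
      (Filter.eventually_principal.mpr fun ζ h => h)
  filter_upwards [hcomap hRcond, hargev] with ζ hrc hargζ
  obtain ⟨hr1, hrs, hrtail⟩ := hrc
  set r : ℝ := ‖ζ‖ with hrdef
  have hr0 : (0:ℝ) < r := lt_of_lt_of_le one_pos hr1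
  have hζne : ζ ≠ 0 := by
    intro h
    rw [hrdef, h] at hr0
    simp at hr0
  -- Re ζ ≥ s₀ * r
  have hcr : s₀ * r ≤ ζ.re := by
    have hcos := Complex.cos_arg hζne
    have hcosge : s₀ ≤ Real.cos ζ.arg := by
      rw [hs₀def, ← Real.cos_abs ζ.arg, ← Real.cos_pi_div_two_sub δ]
      apply Real.cos_le_cos_of_nonneg_of_le_pi (abs_nonneg _)
        (by linarith [Real.pi_pos]) hargζ
    have : ζ.re = r * Real.cos ζ.arg := by
      rw [hcos]; field_simp [hrdef]; rw [hrdef]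
    rw [this, mul_comm s₀ r]
    exact mul_le_mul_of_nonneg_left hcosge hr0.le
  set c : ℝ := ζ.re with hcdef
  have hc1 : 1 ≤ c := le_trans (le_trans (le_max_left 1 ζ0.re) hrs) hcr
  have hcc0 : ζ0.re ≤ c := le_trans (le_trans (le_max_right 1 ζ0.re) hrs) hcr
  have hc : 0 < c := lt_of_lt_of_le one_pos hc1
  have hc' : 0 < ζ.re := hc
  -- integrability of f * exp(-ζx)
  have hmes : AEStronglyMeasurable (fun x : ℝ => f x * Complex.exp (-ζ * x))
      (volume.restrict (Set.Ioi 0)) := by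
    have h1 : (fun x : ℝ => f x * Complex.exp (-ζ * x)) = fun x : ℝ =>
        (f x * Complex.exp (-ζ0 * x)) * Complex.exp (-(ζ-ζ0) * x) := by
      funext x
      rw [mul_assoc, ← Complex.exp_add]
      ring_nf
    rw [h1]
    exact hconv.aestronglyMeasurable.mul
      ((Complex.continuous_exp.comp (continuous_const.mul
        Complex.continuous_ofReal)).aestronglyMeasurable)
  have intf : IntegrableOn (fun x : ℝ => f x * Complex.exp (-ζ * x)) (Set.Ioi 0) := by
    refine Integrable.mono' hconv.norm hmes ?_
    filter_upwards [ae_restrict_mem measurableSet_Ioi] with x hx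
    have hx0 : (0:ℝ) < x := hx
    rw [norm_mul, norm_mul, Complex.norm_exp, Complex.norm_exp]
    apply mul_le_mul_of_nonneg_left _ (norm_nonneg _)
    apply Real.exp_le_exp.mpr
    simp only [Complex.neg_re, Complex.mul_re, Complex.ofReal_re, Complex.ofReal_im]
    nlinarith [hcc0, hx0.le]
  -- integrability of the power terms
  have intpow : ∀ n ∈ range (N+1), IntegrableOn
      (fun x : ℝ => a n * ((x:ℂ) ^ (β n - 1) * Complex.exp (-ζ*x))) (Set.Ioi 0) := by
    intro n hn
    exact (intPowExpC (hβpos n (Nat.lt_succ_iff.mp (mem_range.mp hn))) hc').const_mul _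
  have hsum : IntegrableOn (fun x : ℝ => ∑ n ∈ range (N+1),
      a n * ((x:ℂ) ^ (β n - 1) * Complex.exp (-ζ*x))) (Set.Ioi 0) :=
    integrable_finset_sum _ intpow
  -- the remainder function
  set G : ℝ → ℂ := fun x => (f x - ∑ n ∈ range (N + 1), a n * (x : ℂ) ^ (β n - 1)) *
    Complex.exp (-ζ * x) with hGdef
  have hGeq : ∀ x : ℝ, G x = f x * Complex.exp (-ζ*x) -
      ∑ n ∈ range (N+1), a n * ((x:ℂ) ^ (β n - 1) * Complex.exp (-ζ*x)) := by
    intro x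
    simp only [hGdef, sub_mul, Finset.sum_mul]
    congr 1
    exact Finset.sum_congr rfl fun n _ => (mul_assoc _ _ _)
  have intG : IntegrableOn G (Set.Ioi 0) := by
    have h : IntegrableOn (fun x : ℝ => f x * Complex.exp (-ζ*x) -
        ∑ n ∈ range (N+1), a n * ((x:ℂ) ^ (β n - 1) * Complex.exp (-ζ*x))) (Set.Ioi 0) :=
      intf.sub hsum
    exact h.congr_fun (fun x _ => (hGeq x).symm) measurableSet_Ioi
  -- the main identity
  have key : (∫ x in Set.Ioi (0:ℝ), f x * Complex.exp (-ζ * x)) -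
      ∑ n ∈ range (N + 1), a n * Complex.Gamma (β n) * ζ ^ (-β n)
      = ∫ x in Set.Ioi (0:ℝ), G x := by
    have hsumval : ∫ x in Set.Ioi (0:ℝ), (∑ n ∈ range (N+1),
        a n * ((x:ℂ) ^ (β n - 1) * Complex.exp (-ζ*x)))
        = ∑ n ∈ range (N+1), a n * Complex.Gamma (β n) * ζ ^ (-β n) := by
      rw [integral_finset_sum _ intpow]
      refine Finset.sum_congr rfl fun n hn => ?_
      rw [integral_const_mul,
        laplace_cpow (hβpos n (Nat.lt_succ_iff.mp (mem_range.mp hn))) hc']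
      ring
    have : ∫ x in Set.Ioi (0:ℝ), G x = (∫ x in Set.Ioi (0:ℝ), f x * Complex.exp (-ζ * x)) -
        ∫ x in Set.Ioi (0:ℝ), (∑ n ∈ range (N+1),
          a n * ((x:ℂ) ^ (β n - 1) * Complex.exp (-ζ*x))) := by
      rw [← integral_sub intf hsum]
      exact setIntegral_congr_fun measurableSet_Ioi fun x _ => hGeq x
    rw [this, hsumval]
  rw [key]
  -- split the integral at T
  have hsplit : ∫ x in Set.Ioi (0:ℝ), G x =
      (∫ x in Set.Ioc (0:ℝ) T, G x) + ∫ x in Set.Ioi T, G x := by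
    rw [← setIntegral_union (Set.Ioc_disjoint_Ioi le_rfl) measurableSet_Ioi
      (intG.mono_set Set.Ioc_subset_Ioi_self) (intG.mono_set (Set.Ioi_subset_Ioi hT0.le)),
      Set.Ioc_union_Ioi_eq_Ioi hT0.le]
  -- piece 1 : near zero
  have hP1 : ‖∫ x in Set.Ioc (0:ℝ) T, G x‖ ≤ ε/(2*K) * r ^ (-ρ) := by
    have hint1 : IntegrableOn (fun x : ℝ => ε₁ * (x ^ (ρ-1) * Real.exp (-(c*x))))
        (Set.Ioi 0) := (intPowExp hρ hc).const_mul ε₁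
    have hb1 : ‖∫ x in Set.Ioc (0:ℝ) T, G x‖ ≤
        ∫ x in Set.Ioc (0:ℝ) T, ε₁ * (x ^ (ρ-1) * Real.exp (-(c*x))) := by
      refine norm_setInt_le measurableSet_Ioc (intG.mono_set Set.Ioc_subset_Ioi_self)
        (hint1.mono_set Set.Ioc_subset_Ioi_self) ?_
      intro x hx
      have hx0 : (0:ℝ) < x := hx.1
      rw [hGdef]
      simp only
      rw [norm_mul, Complex.norm_exp]
      have hexp : (-ζ * x).re = -(c*x) := by
        simp [Complex.neg_re, Complex.mul_re, hcdef]
      rw [hexp, ← mul_assoc]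
      exact mul_le_mul_of_nonneg_right (hgbound x hx) (Real.exp_pos _).le
    have hb2 : ∫ x in Set.Ioc (0:ℝ) T, ε₁ * (x ^ (ρ-1) * Real.exp (-(c*x))) ≤
        ∫ x in Set.Ioi (0:ℝ), ε₁ * (x ^ (ρ-1) * Real.exp (-(c*x))) := by
      refine setInt_le_full Set.Ioc_subset_Ioi_self measurableSet_Ioc hint1 ?_
      intro x hx
      have hx0 : (0:ℝ) < x := hx
      positivity
    have hb3 : ∫ x in Set.Ioi (0:ℝ), ε₁ * (x ^ (ρ-1) * Real.exp (-(c*x)))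
        = ε₁ * ((1/c) ^ ρ * Real.Gamma ρ) := by
      rw [integral_const_mul, Real.integral_rpow_mul_exp_neg_mul_Ioi hρ hc]
    have hb4 : ε₁ * ((1/c) ^ ρ * Real.Gamma ρ) ≤ ε/(2*K) * r ^ (-ρ) := by
      have hcs : (1/c : ℝ) ^ ρ ≤ (1/(s₀*r)) ^ ρ := by
        apply Real.rpow_le_rpow (by positivity) _ hρ.le
        apply one_div_le_one_div_of_le (by positivity) hcr
      have hsr : (1/(s₀*r) : ℝ) ^ ρ = s₀ ^ (-ρ) * r ^ (-ρ) := by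
        rw [one_div, mul_inv, Real.mul_rpow (by positivity) (by positivity),
          Real.inv_rpow hs₀.le, Real.inv_rpow hr0.le, ← Real.rpow_neg hs₀.le,
          ← Real.rpow_neg hr0.le]
      have : ε₁ * ((1/c) ^ ρ * Real.Gamma ρ) ≤ ε₁ * (s₀ ^ (-ρ) * r ^ (-ρ) * Real.Gamma ρ) := by
        apply mul_le_mul_of_nonneg_left _ hε₁.le
        apply mul_le_mul_of_nonneg_right _ hΓρ.le
        rw [← hsr]; exact hcs
      refine this.trans (le_of_eq ?_)
      rw [hε₁def, hC₁def]
      field_simp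
    linarith [hb1, hb2.trans_eq hb3, hb4]
  -- piece 2 : tail of f
  have hP2 : ‖∫ x in Set.Ioi T, f x * Complex.exp (-ζ * x)‖ ≤
      M * Real.exp (ζ0.re * T) * Real.exp (-(c*T/2)) := by
    have hb1 : ‖∫ x in Set.Ioi T, f x * Complex.exp (-ζ * x)‖ ≤
        ∫ x in Set.Ioi T, Real.exp (-((c - ζ0.re)*T)) * ‖f x * Complex.exp (-ζ0 * x)‖ := by
      have hint2 : IntegrableOn (fun x : ℝ => Real.exp (-((c - ζ0.re)*T)) *
          ‖f x * Complex.exp (-ζ0 * x)‖) (Set.Ioi 0) := hconv.norm.const_mul _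
      refine norm_setInt_le measurableSet_Ioi (intf.mono_set (Set.Ioi_subset_Ioi hT0.le))
        (hint2.mono_set (Set.Ioi_subset_Ioi hT0.le)) ?_
      intro x hx
      have hxT : T < x := hx
      have hx0 : (0:ℝ) < x := lt_trans hT0 hxT
      rw [norm_mul, norm_mul, Complex.norm_exp, Complex.norm_exp]
      have he1 : (-ζ * x).re = -(c*x) := by simp [Complex.neg_re, Complex.mul_re, hcdef]
      have he2 : (-ζ0 * x).re = -(ζ0.re*x) := by simp [Complex.neg_re, Complex.mul_re]
      rw [he1, he2, mul_comm (Real.exp _) (‖f x‖ * Real.exp _), mul_assoc, ← Real.exp_add]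
      apply mul_le_mul_of_nonneg_left _ (norm_nonneg _)
      apply Real.exp_le_exp.mpr
      nlinarith [hcc0, hxT.le]
    have hb2 : ∫ x in Set.Ioi T, Real.exp (-((c - ζ0.re)*T)) * ‖f x * Complex.exp (-ζ0 * x)‖
        ≤ Real.exp (-((c - ζ0.re)*T)) * M := by
      rw [integral_const_mul]
      apply mul_le_mul_of_nonneg_left _ (Real.exp_pos _).le
      refine setInt_le_full (Set.Ioi_subset_Ioi hT0.le) measurableSet_Ioi hconv.norm ?_
      intro x _
      exact norm_nonneg _
    have hb3 : Real.exp (-((c - ζ0.re)*T)) * M ≤ M * Real.exp (ζ0.re * T) *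
        Real.exp (-(c*T/2)) := by
      rw [mul_comm _ M, mul_assoc, ← Real.exp_add]
      apply mul_le_mul_of_nonneg_left _ hM0
      apply Real.exp_le_exp.mpr
      nlinarith [hT0.le, hc1]
    linarith [hb1, hb2, hb3]
  -- piece 3 : tails of the power terms
  have hP3 : ∀ n ∈ range (N+1), ‖∫ x in Set.Ioi T,
      a n * ((x:ℂ) ^ (β n - 1) * Complex.exp (-ζ*x))‖ ≤
      ‖a n‖ * Kn n * Real.exp (-(c*T/2)) := by
    intro n hn
    have hbn : 0 < (β n).re := hβpos n (Nat.lt_succ_iff.mp (mem_range.mp hn))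
    have hb1 : ‖∫ x in Set.Ioi T, a n * ((x:ℂ) ^ (β n - 1) * Complex.exp (-ζ*x))‖ ≤
        ∫ x in Set.Ioi T, ‖a n‖ * Real.exp (-(c*T/2)) *
          (x ^ ((β n).re - 1) * Real.exp (-((1/2)*x))) := by
      have hint3 : IntegrableOn (fun x : ℝ => ‖a n‖ * Real.exp (-(c*T/2)) *
          (x ^ ((β n).re - 1) * Real.exp (-((1/2)*x)))) (Set.Ioi 0) :=
        (intPowExp hbn (by norm_num)).const_mul _
      refine norm_setInt_le measurableSet_Ioi
        ((intpow n hn).mono_set (Set.Ioi_subset_Ioi hT0.le))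
        (hint3.mono_set (Set.Ioi_subset_Ioi hT0.le)) ?_
      intro x hx
      have hxT : T < x := hx
      have hx0 : (0:ℝ) < x := lt_trans hT0 hxT
      rw [norm_mul, norm_aux hx0, mul_assoc]
      apply mul_le_mul_of_nonneg_left _ (norm_nonneg _)
      rw [show Real.exp (-(c*T/2)) * (x ^ ((β n).re - 1) * Real.exp (-((1/2:ℝ)*x)))
          = x ^ ((β n).re - 1) * (Real.exp (-(c*T/2)) * Real.exp (-((1/2:ℝ)*x))) by ring,
        ← Real.exp_add]
      apply mul_le_mul_of_nonneg_left _ (Real.rpow_nonneg hx0.le _)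
      apply Real.exp_le_exp.mpr
      nlinarith [hxT.le, hc1, hT0.le, hx0.le]
    have hb2 : ∫ x in Set.Ioi T, ‖a n‖ * Real.exp (-(c*T/2)) *
        (x ^ ((β n).re - 1) * Real.exp (-((1/2)*x))) ≤
        ‖a n‖ * Real.exp (-(c*T/2)) * Kn n := by
      rw [integral_const_mul]
      apply mul_le_mul_of_nonneg_left _ (by positivity)
      refine setInt_le_full (Set.Ioi_subset_Ioi hT0.le) measurableSet_Ioi
        (intPowExp hbn (by norm_num)) ?_
      intro x hx
      have hx0 : (0:ℝ) < x := hx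
      positivity
    calc ‖∫ x in Set.Ioi T, a n * ((x:ℂ) ^ (β n - 1) * Complex.exp (-ζ*x))‖
        ≤ ‖a n‖ * Real.exp (-(c*T/2)) * Kn n := le_trans hb1 hb2
      _ = ‖a n‖ * Kn n * Real.exp (-(c*T/2)) := by ring
  -- decompose the tail
  have htaileq : ∫ x in Set.Ioi T, G x = (∫ x in Set.Ioi T, f x * Complex.exp (-ζ*x)) -
      ∑ n ∈ range (N+1), ∫ x in Set.Ioi T, a n * ((x:ℂ) ^ (β n - 1) * Complex.exp (-ζ*x)) := by
    rw [← integral_finset_sum _ (fun n hn => (intpow n hn).mono_set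
      (Set.Ioi_subset_Ioi hT0.le)),
      ← integral_sub (intf.mono_set (Set.Ioi_subset_Ioi hT0.le))
      (integrable_finset_sum _ (fun n hn => (intpow n hn).mono_set (Set.Ioi_subset_Ioi hT0.le)))]
    exact setIntegral_congr_fun measurableSet_Ioi fun x _ => hGeq x
  -- combine the tail pieces
  have htail : ‖∫ x in Set.Ioi T, G x‖ ≤ D * Real.exp (-(c*T/2)) := by
    rw [htaileq]
    calc ‖(∫ x in Set.Ioi T, f x * Complex.exp (-ζ*x)) -
        ∑ n ∈ range (N+1), ∫ x in Set.Ioi T, a n * ((x:ℂ) ^ (β n - 1) * Complex.exp (-ζ*x))‖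
        ≤ ‖∫ x in Set.Ioi T, f x * Complex.exp (-ζ*x)‖ +
          ‖∑ n ∈ range (N+1), ∫ x in Set.Ioi T,
            a n * ((x:ℂ) ^ (β n - 1) * Complex.exp (-ζ*x))‖ := norm_sub_le _ _
      _ ≤ M * Real.exp (ζ0.re * T) * Real.exp (-(c*T/2)) +
          ∑ n ∈ range (N+1), ‖a n‖ * Kn n * Real.exp (-(c*T/2)) := by
          apply add_le_add hP2
          exact (norm_sum_le _ _).trans (Finset.sum_le_sum hP3)
      _ = D * Real.exp (-(c*T/2)) := by
          rw [hDdef, add_mul, Finset.sum_mul]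
  -- tail is eventually small
  have htail2 : D * Real.exp (-(c*T/2)) ≤ ε/(2*K) * r ^ (-ρ) := by
    have h1 : Real.exp (-(c*T/2)) ≤ Real.exp (-(s₀*T/2) * r) := by
      apply Real.exp_le_exp.mpr
      nlinarith [hcr, hT0.le]
    calc D * Real.exp (-(c*T/2)) ≤ (D+1) * Real.exp (-(s₀*T/2) * r) := by
          apply mul_le_mul (by linarith) h1 (Real.exp_pos _).le (by linarith)
      _ ≤ ε/(2*K) * r ^ (-ρ) := hrtail
  -- norm of ζ^(-β N) from below
  have hnormζ : r ^ (-ρ) / K ≤ ‖ζ ^ (-(β N))‖ := by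
    have hexpK : Real.exp (ζ.arg * (-(β N)).im) ≤ K := by
      rw [hKdef]
      apply Real.exp_le_exp.mpr
      have h2 : (-(β N)).im = -(β N).im := by simp
      rw [h2]
      calc ζ.arg * -(β N).im ≤ |ζ.arg * -(β N).im| := le_abs_self _
        _ = |ζ.arg| * |(β N).im| := by rw [abs_mul, abs_neg]
        _ ≤ (Real.pi/2) * |(β N).im| := by
            apply mul_le_mul_of_nonneg_right _ (abs_nonneg _)
            linarith [hargζ, hδ]
    have h1 : (-(β N)).re = -ρ := by simp [hρdef]
    rw [Complex.norm_cpow_of_ne_zero hζne, h1, ← hrdef]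
    exact div_le_div_of_nonneg_left (Real.rpow_nonneg hr0.le _) (Real.exp_pos _) hexpK
  -- put everything together
  have hfinal : ‖∫ x in Set.Ioi (0:ℝ), G x‖ ≤ ε * ‖ζ ^ (-(β N))‖ := by
    rw [hsplit]
    calc ‖(∫ x in Set.Ioc (0:ℝ) T, G x) + ∫ x in Set.Ioi T, G x‖
        ≤ ‖∫ x in Set.Ioc (0:ℝ) T, G x‖ + ‖∫ x in Set.Ioi T, G x‖ := norm_add_le _ _
      _ ≤ ε/(2*K) * r ^ (-ρ) + ε/(2*K) * r ^ (-ρ) := by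
          apply add_le_add hP1 (htail.trans htail2)
      _ = ε * (r ^ (-ρ) / K) := by field_simp; ring
      _ ≤ ε * ‖ζ ^ (-(β N))‖ := mul_le_mul_of_nonneg_left hnormζ hε.le
  exact hfinal
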